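/- arXiv:1606.02750 — 2 statements merged into one kernel-verified Lean document; each statement's English description precedes it below -/
import Mathlib

section
/- Let λ, μ be real numbers with λ ≥ 1 and μ > 3/2, and let n be a natural number. Then for every z in the open unit disc 𝕌 the partial sum (𝒲_{λ,μ})_n(z) is nonzero for z ≠ 0 and Re(𝒲_{λ,μ}(z)/(𝒲_{λ,μ})_n(z)) ≥ (2μ−3)/(2μ−1), where at z = 0 the ratio is understood as its analytic extension with value 1. -/
private lemma two_pow_le_factorial (m : ℕ) : (2:ℝ)^m ≤ ((m+1).factorial : ℝ) := by
  induction m with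
  | zero => norm_num
  | succ k ih =>
    have h : ((k+2).factorial : ℝ) = (k+2) * (k+1).factorial := by
      rw [Nat.factorial_succ]; push_cast; ring
    have h2 : (0:ℝ) < 2^k := by positivity
    calc (2:ℝ)^(k+1) = 2 * 2^k := by ring
    _ ≤ (k+2) * (k+1).factorial := by
        have : (2:ℝ) ≤ (k:ℝ)+2 := by linarith [Nat.cast_nonneg (α := ℝ) k]
        nlinarith [ih]
    _ = ((k+1+1).factorial : ℝ) := by rw [h]

private lemma gamma_lower (mu : ℝ) (hmu : 0 < mu) (m : ℕ) :
    mu * (mu+1)^m * Real.Gamma mu ≤ Real.Gamma ((m:ℝ) + 1 + mu) := by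
  induction m with
  | zero =>
    simp only [Nat.cast_zero, zero_add, pow_zero, mul_one]
    rw [show (1:ℝ) + mu = mu + 1 by ring, Real.Gamma_add_one hmu.ne']
  | succ k ih =>
    push_cast
    have hpos : 0 < (k:ℝ) + 1 + mu := by positivity
    have hG : Real.Gamma ((k:ℝ)+1+1+mu) = ((k:ℝ)+1+mu) * Real.Gamma ((k:ℝ)+1+mu) := by
      rw [show (k:ℝ)+1+1+mu = ((k:ℝ)+1+mu) + 1 by ring, Real.Gamma_add_one hpos.ne']
    have hGpos : 0 < Real.Gamma ((k:ℝ)+1+mu) := Real.Gamma_pos_of_pos hpos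
    have hk : (mu + 1) ≤ (k:ℝ) + 1 + mu := by linarith [Nat.cast_nonneg (α := ℝ) k]
    have hpow : (0:ℝ) < (mu+1)^k := by positivity
    calc mu * (mu+1)^(k+1) * Real.Gamma mu = (mu+1) * (mu * (mu+1)^k * Real.Gamma mu) := by ring
    _ ≤ (mu+1) * Real.Gamma ((k:ℝ)+1+mu) := by
        apply mul_le_mul_of_nonneg_left ih (by linarith)
    _ ≤ ((k:ℝ)+1+mu) * Real.Gamma ((k:ℝ)+1+mu) := by
        apply mul_le_mul_of_nonneg_right hk hGpos.le
    _ = Real.Gamma ((k:ℝ)+1+1+mu) := hG.symm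
  
private lemma coeff_le (lam mu : ℝ) (hlam : 1 ≤ lam) (hmu : 3/2 < mu) (m : ℕ) :
    Real.Gamma mu / (((m+1).factorial : ℝ) * Real.Gamma (lam * ((m:ℝ)+1) + mu)) ≤
      (1/mu) * (1/(2*(mu+1)))^m := by
  have hmu0 : (0:ℝ) < mu := by linarith
  have hGmu : 0 < Real.Gamma mu := Real.Gamma_pos_of_pos hmu0
  have hmem1 : ((m:ℝ) + 1 + mu) ∈ Set.Ici (2:ℝ) := by
    simp only [Set.mem_Ici]; have := Nat.cast_nonneg (α := ℝ) m; linarith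
  have hle : (m:ℝ) + 1 + mu ≤ lam * ((m:ℝ)+1) + mu := by
    have hm0 : (0:ℝ) ≤ (m:ℝ) + 1 := by positivity
    nlinarith
  have hmem2 : (lam * ((m:ℝ)+1) + mu) ∈ Set.Ici (2:ℝ) := by
    simp only [Set.mem_Ici] at hmem1 ⊢; linarith
  have hGmono : Real.Gamma ((m:ℝ)+1+mu) ≤ Real.Gamma (lam * ((m:ℝ)+1) + mu) :=
    Real.Gamma_strictMonoOn_Ici.monotoneOn hmem1 hmem2 hle
  have hlow : mu * (mu+1)^m * Real.Gamma mu ≤ Real.Gamma ((m:ℝ)+1+mu) := gamma_lower mu hmu0 m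
  have hfact := two_pow_le_factorial m
  have hden_pos : (0:ℝ) < mu * (2*(mu+1))^m * Real.Gamma mu := by positivity
  have hden_le : mu * (2*(mu+1))^m * Real.Gamma mu ≤
      ((m+1).factorial : ℝ) * Real.Gamma (lam * ((m:ℝ)+1) + mu) := by
    have h1 : mu * (2*(mu+1))^m * Real.Gamma mu
        = (2:ℝ)^m * (mu * (mu+1)^m * Real.Gamma mu) := by rw [mul_pow]; ring
    rw [h1]
    have hA : mu * (mu+1)^m * Real.Gamma mu ≤ Real.Gamma (lam * ((m:ℝ)+1) + mu) :=
      le_trans hlow hGmono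
    have hApos : (0:ℝ) ≤ mu * (mu+1)^m * Real.Gamma mu := by positivity
    exact mul_le_mul hfact hA hApos (by positivity)
  have key : Real.Gamma mu / (((m+1).factorial : ℝ) * Real.Gamma (lam * ((m:ℝ)+1) + mu)) ≤
      Real.Gamma mu / (mu * (2*(mu+1))^m * Real.Gamma mu) :=
    div_le_div_of_nonneg_left hGmu.le hden_pos hden_le
  refine key.trans_eq ?_
  rw [eq_comm]
  field_simp
  rw [← mul_pow, one_div_mul_cancel (by have : (0:ℝ) < 2*(mu+1) := by linarith
                                        exact this.ne'), one_pow]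


/-- The normalized Wright function
`𝒲_{λ,μ}(z) = z + ∑_{m=1}^∞ (Γ(μ)/(m! Γ(λm+μ))) z^{m+1}`. -/
noncomputable def normWright (lam mu : ℝ) (z : ℂ) : ℂ :=
  ∑' m : ℕ, ((Real.Gamma mu / (Nat.factorial m * Real.Gamma (lam * m + mu)) : ℝ) : ℂ) * z ^ (m + 1)

/-- The `n`-th partial sum `(𝒲_{λ,μ})_n(z) = z + ∑_{m=1}^n (Γ(μ)/(m! Γ(λm+μ))) z^{m+1}`. -/
noncomputable def normWrightPartial (lam mu : ℝ) (n : ℕ) (z : ℂ) : ℂ :=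
  ∑ m ∈ Finset.range (n + 1),
    ((Real.Gamma mu / (Nat.factorial m * Real.Gamma (lam * m + mu)) : ℝ) : ℂ) * z ^ (m + 1)

/-- If `λ ≥ 1` and `μ > 3/2`, then on the open unit disc the partial sum `(𝒲_{λ,μ})_n`
is nonzero away from `0`, and `Re(𝒲_{λ,μ}(z)/(𝒲_{λ,μ})_n(z)) ≥ (2μ-3)/(2μ-1)`, the ratio
being understood as its analytic extension, with value `1`, at `z = 0`. -/
theorem re_normWright_div_partial (lam mu : ℝ) (hlam : 1 ≤ lam) (hmu : 3 / 2 < mu) (n : ℕ) :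
    ∀ z : ℂ, ‖z‖ < 1 →
      (z ≠ 0 → normWrightPartial lam mu n z ≠ 0) ∧
      (2 * mu - 3) / (2 * mu - 1) ≤
        (if z = 0 then (1 : ℂ) else normWright lam mu z / normWrightPartial lam mu n z).re := by
  have hmu0 : (0:ℝ) < mu := by linarith
  have hGmu : 0 < Real.Gamma mu := Real.Gamma_pos_of_pos hmu0
  set c : ℕ → ℝ := fun m => Real.Gamma mu / (Nat.factorial m * Real.Gamma (lam * m + mu))
    with hcdef
  have hcpos : ∀ m, 0 < c m := by
    intro m
    have h1 : (0:ℝ) < lam * m + mu := by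
      have : (0:ℝ) ≤ lam * m := by positivity
      linarith
    have := Real.Gamma_pos_of_pos h1
    have hf : (0:ℝ) < (Nat.factorial m : ℝ) := by positivity
    exact div_pos hGmu (by positivity)
  have hc0 : c 0 = 1 := by
    simp only [hcdef, Nat.cast_zero, Nat.factorial_zero, Nat.cast_one, mul_zero, zero_add,
      one_mul]
    exact div_self hGmu.ne'
  set q : ℝ := 1/(2*(mu+1)) with hqdef
  have hq0 : 0 < q := by rw [hqdef]; positivity
  have hq1 : q < 1 := by rw [hqdef, div_lt_one (by linarith)]; linarith
  have hcle : ∀ m, c (m+1) ≤ (1/mu) * q^m := by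
    intro m
    have h := coeff_le lam mu hlam hmu m
    rw [hcdef, hqdef]
    simp only [Nat.cast_add, Nat.cast_one]
    exact h
  set S : ℝ := 2*(mu+1)/(mu*(2*mu+1)) with hSdef
  have hS0 : 0 < S := by rw [hSdef]; positivity
  have hSval : (1/mu) * (1-q)⁻¹ = S := by
    rw [hqdef, hSdef]
    rw [show 1 - 1/(2*(mu+1)) = (2*mu+1)/(2*(mu+1)) by field_simp; ring]
    field_simp
  have hS2 : (2*mu-1)*S ≤ 2 := by
    rw [hSdef, ← mul_div_assoc, div_le_iff₀ (by positivity : (0:ℝ) < mu*(2*mu+1))]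
    nlinarith
  have hS1 : S < 1 := by nlinarith
  intro z hz
  by_cases hz0 : z = 0
  · subst hz0
    refine ⟨fun h => absurd rfl h, ?_⟩
    rw [if_pos rfl, Complex.one_re, div_le_one (by linarith)]
    linarith
  have hr0 : 0 < ‖z‖ := norm_pos_iff.mpr hz0
  set r : ℝ := ‖z‖ with hrdef
  set e : ℕ → ℂ := fun m => ((c m : ℝ) : ℂ) * z ^ (m+1) with hedef
  have hnorm_e : ∀ m, ‖e m‖ = c m * r^(m+1) := by
    intro m
    rw [hedef]
    simp only [norm_mul, norm_pow, Complex.norm_real, Real.norm_eq_abs,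
      abs_of_pos (hcpos m)]
    rfl
  set d : ℕ → ℝ := fun m => c (m+1) * r^(m+2) with hddef
  have hd0 : ∀ m, 0 ≤ d m := fun m => mul_nonneg (hcpos _).le (by positivity)
  have hrm : ∀ m : ℕ, r^(m+2) ≤ r^2 := by
    intro m
    calc r^(m+2) = r^m * r^2 := by ring
    _ ≤ 1 * r^2 := by
        apply mul_le_mul_of_nonneg_right _ (by positivity)
        exact pow_le_one₀ hr0.le hz.le
    _ = r^2 := one_mul _
  have hdle : ∀ m, d m ≤ (1/mu * r^2) * q^m := by
    intro m
    calc d m = c (m+1) * r^(m+2) := rfl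
    _ ≤ ((1/mu) * q^m) * r^(m+2) := mul_le_mul_of_nonneg_right (hcle m) (by positivity)
    _ ≤ ((1/mu) * q^m) * r^2 := mul_le_mul_of_nonneg_left (hrm m) (by positivity)
    _ = (1/mu * r^2) * q^m := by ring
  have hgsum : Summable (fun m : ℕ => (1/mu * r^2) * q^m) :=
    (summable_geometric_of_lt_one hq0.le hq1).mul_left _
  have hd : Summable d := Summable.of_nonneg_of_le hd0 hdle hgsum
  have hdsum : ∑' m, d m ≤ r^2 * S := by
    calc ∑' m, d m ≤ ∑' m, (1/mu * r^2) * q^m := Summable.tsum_le_tsum hdle hd hgsum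
    _ = (1/mu * r^2) * (1-q)⁻¹ := by
        rw [tsum_mul_left, tsum_geometric_of_lt_one hq0.le hq1]
    _ = r^2 * ((1/mu) * (1-q)⁻¹) := by ring
    _ = r^2 * S := by rw [hSval]
  have hde : ∀ m, ‖e (m+1)‖ = d m := fun m => by rw [hnorm_e]
  have hesummable_norm : Summable (fun m => ‖e m‖) := by
    rw [← summable_nat_add_iff 1]
    simpa only [hde] using hd
  have he : Summable e := hesummable_norm.of_norm
  have hW : normWright lam mu z = ∑' m, e m := rfl
  have hWn : normWrightPartial lam mu n z = ∑ m ∈ Finset.range (n+1), e m := rfl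
  set T : ℂ := ∑' i : ℕ, e (i + (n+1)) with hTdef
  have hsplit : normWrightPartial lam mu n z + T = normWright lam mu z := by
    rw [hW, hWn, hTdef]
    exact Summable.sum_add_tsum_nat_add (n+1) he
  set Pz : ℂ := ∑ m ∈ Finset.range n, e (m+1) with hPzdef
  have h0 : e 0 = z := by simp only [hedef]; rw [hc0]; simp
  have hfn_eq : normWrightPartial lam mu n z = z + Pz := by
    rw [hWn, Finset.sum_range_succ', hPzdef, h0, add_comm]
  have hTnorm : ‖T‖ ≤ ∑' i, d (i + n) := by
    have hs : Summable (fun i => ‖e (i + (n+1))‖) :=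
      (summable_nat_add_iff (f := fun m => ‖e m‖) (n+1)).2 hesummable_norm
    calc ‖T‖ ≤ ∑' i, ‖e (i + (n+1))‖ := norm_tsum_le_tsum_norm hs
    _ = ∑' i, d (i + n) := tsum_congr fun i => by
        rw [show i + (n+1) = (i+n) + 1 by omega, hde]
  have hPnorm : ‖Pz‖ ≤ ∑ m ∈ Finset.range n, d m := by
    calc ‖Pz‖ ≤ ∑ m ∈ Finset.range n, ‖e (m+1)‖ := norm_sum_le _ _
    _ = ∑ m ∈ Finset.range n, d m := Finset.sum_congr rfl fun m _ => hde m
  have hdsplit : ∑ m ∈ Finset.range n, d m + ∑' i, d (i + n) = ∑' m, d m :=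
    Summable.sum_add_tsum_nat_add n hd
  have hcomb : ‖T‖ + ‖Pz‖ ≤ r^2 * S := by
    linarith [hTnorm, hPnorm, hdsum, hdsplit]
  have hPz_lt : ‖Pz‖ < r := by
    have h1 : ‖Pz‖ ≤ r^2 * S := le_trans (by linarith [norm_nonneg T]) hcomb
    nlinarith [norm_nonneg Pz]
  have hfn_lower : r - ‖Pz‖ ≤ ‖normWrightPartial lam mu n z‖ := by
    rw [hfn_eq]
    have h := norm_sub_norm_le z (-Pz)
    rw [sub_neg_eq_add, norm_neg] at h
    linarith
  have hfn_pos : 0 < ‖normWrightPartial lam mu n z‖ := lt_of_lt_of_le (by linarith) hfn_lower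
  have hfn_ne : normWrightPartial lam mu n z ≠ 0 := norm_pos_iff.mp hfn_pos
  refine ⟨fun _ => hfn_ne, ?_⟩
  rw [if_neg hz0]
  have hkey : (2*mu-1) * ‖T‖ ≤ 2 * ‖normWrightPartial lam mu n z‖ := by
    have h2 : (2:ℝ) ≤ 2*mu - 1 := by linarith
    have hr1 : r ≤ 1 := hz.le
    have e1 : (2*mu-1) * ‖T‖ + 2 * ‖Pz‖ ≤ (2*mu-1) * (‖T‖ + ‖Pz‖) := by
      nlinarith [norm_nonneg Pz]
    have e2 : (2*mu-1) * (‖T‖ + ‖Pz‖) ≤ (2*mu-1) * (r^2 * S) := by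
      apply mul_le_mul_of_nonneg_left hcomb (by linarith)
    have e3 : (2*mu-1) * (r^2 * S) ≤ 2 * r := by nlinarith
    linarith [hfn_lower]
  have hdiv : normWright lam mu z / normWrightPartial lam mu n z
      = 1 + T / normWrightPartial lam mu n z := by
    rw [← hsplit, add_div, div_self hfn_ne]
  rw [hdiv, Complex.add_re, Complex.one_re]
  have hre : -(‖T‖ / ‖normWrightPartial lam mu n z‖) ≤ (T / normWrightPartial lam mu n z).re := by
    have h1 := (abs_le.mp (Complex.abs_re_le_norm (T / normWrightPartial lam mu n z))).1
    rwa [norm_div] at h1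
  have hratio : ‖T‖ / ‖normWrightPartial lam mu n z‖ ≤ 2 / (2*mu-1) := by
    rw [div_le_div_iff₀ hfn_pos (by linarith)]
    linarith [hkey]
  have heq : (2*mu-3)/(2*mu-1) = 1 - 2/(2*mu-1) := by
    rw [eq_sub_iff_add_eq, ← add_div, div_eq_one_iff_eq (by linarith : (2*mu-1) ≠ 0)]
    ring
  rw [heq]
  linarith [hre, hratio]
end

section
/- Let λ, μ be real numbers with λ ≥ 1 and μ > 3, and let n be a natural number. Then for every z in the open unit disc 𝕌 the derivative (𝒲_{λ,μ})'_n(z) is nonzero and Re(𝒲'_{λ,μ}(z)/(𝒲_{λ,μ})'_n(z)) ≥ (μ−3)/(μ−1). -/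
open Finset
lemma fact_bound' (m : ℕ) (hm : 1 ≤ m) : (m + 1 : ℝ) ≤ 2 * m.factorial := by
  induction m with
  | zero => omega
  | succ k ih =>
    rcases Nat.eq_zero_or_pos k with hk | hk
    · subst hk; norm_num [Nat.factorial]
    · have h1 := ih hk
      have h2 : (1:ℝ) ≤ k.factorial := by exact_mod_cast Nat.one_le_iff_ne_zero.mpr k.factorial_ne_zero
      rw [Nat.factorial_succ]
      push_cast
      nlinarith

lemma gamma_add_nat (mu : ℝ) (hmu : 0 < mu) (m : ℕ) :
    Real.Gamma (m + mu) = (∏ j ∈ range m, (mu + j)) * Real.Gamma mu := by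
  induction m with
  | zero => simp
  | succ k ih =>
    have hne : (k : ℝ) + mu ≠ 0 := by positivity
    have : ((k+1 : ℕ) : ℝ) + mu = ((k:ℝ) + mu) + 1 := by push_cast; ring
    rw [this, Real.Gamma_add_one hne, ih, prod_range_succ]
    ring

lemma pow_le_prod (mu : ℝ) (hmu : 0 < mu) (m : ℕ) :
    mu ^ m ≤ ∏ j ∈ range m, (mu + j) := by
  calc mu ^ m = ∏ j ∈ range m, mu := by simp
  _ ≤ _ := by
    apply Finset.prod_le_prod (fun i _ => le_of_lt hmu)
    intro i _
    have : (0:ℝ) ≤ i := Nat.cast_nonneg i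
    linarith

lemma coeff_bound (lam mu : ℝ) (hlam : 1 ≤ lam) (hmu : 3 < mu) (m : ℕ) (hm : 1 ≤ m) :
    Real.Gamma mu * (m + 1) / (Nat.factorial m * Real.Gamma (lam * m + mu))
      ≤ 2 * (1/mu) ^ m := by
  have hmu0 : (0:ℝ) < mu := by linarith
  have hm0 : (0:ℝ) ≤ (m:ℝ) := Nat.cast_nonneg m
  have hG : 0 < Real.Gamma mu := Real.Gamma_pos_of_pos hmu0
  have hmono : Real.Gamma ((m:ℝ) + mu) ≤ Real.Gamma (lam * m + mu) := by
    rcases eq_or_lt_of_le (show (m:ℝ) + mu ≤ lam * m + mu by nlinarith) with h | h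
    · rw [h]
    · exact le_of_lt (Real.Gamma_strictMonoOn_Ici (by simp only [Set.mem_Ici]; linarith)
        (by simp only [Set.mem_Ici]; nlinarith) h)
  have hGm : mu ^ m * Real.Gamma mu ≤ Real.Gamma ((m:ℝ) + mu) := by
    rw [gamma_add_nat mu hmu0 m]
    exact mul_le_mul_of_nonneg_right (pow_le_prod mu hmu0 m) (le_of_lt hG)
  have hfb : ((m:ℝ) + 1) / 2 ≤ (Nat.factorial m : ℝ) := by
    have := fact_bound' m hm; linarith
  have hd : 0 < ((m:ℝ) + 1) / 2 * (mu ^ m * Real.Gamma mu) := by positivity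
  have hD : ((m:ℝ) + 1) / 2 * (mu ^ m * Real.Gamma mu)
      ≤ (Nat.factorial m : ℝ) * Real.Gamma (lam * m + mu) := by
    have h1 : mu ^ m * Real.Gamma mu ≤ Real.Gamma (lam * m + mu) := le_trans hGm hmono
    have h2 : (0:ℝ) ≤ mu ^ m * Real.Gamma mu := by positivity
    have h3 : (0:ℝ) ≤ (Nat.factorial m : ℝ) := Nat.cast_nonneg _
    nlinarith
  calc Real.Gamma mu * (m + 1) / (Nat.factorial m * Real.Gamma (lam * m + mu))
      ≤ Real.Gamma mu * (m + 1) / (((m:ℝ) + 1) / 2 * (mu ^ m * Real.Gamma mu)) := by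
        apply div_le_div_of_nonneg_left (by positivity) hd hD
    _ = 2 * (1/mu) ^ m := by
        have h1 : ((m:ℝ) + 1) ≠ 0 := by positivity
        field_simp
        ring_nf
        rw [← mul_pow, mul_inv_cancel₀ (ne_of_gt hmu0), one_pow]



/-- The derivative of the normalized Wright function:
`𝒲'_{λ,μ}(z) = 1 + ∑_{m=1}^∞ (Γ(μ)(m+1)/(m! Γ(λm+μ))) z^m`. -/
noncomputable def normWrightDeriv (lam mu : ℝ) (z : ℂ) : ℂ :=
  ∑' m : ℕ,
    ((Real.Gamma mu * (m + 1) / (Nat.factorial m * Real.Gamma (lam * m + mu)) : ℝ) : ℂ) * z ^ m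

/-- The derivative of the `n`-th partial sum:
`(𝒲_{λ,μ})'_n(z) = 1 + ∑_{m=1}^n (Γ(μ)(m+1)/(m! Γ(λm+μ))) z^m`. -/
noncomputable def normWrightPartialDeriv (lam mu : ℝ) (n : ℕ) (z : ℂ) : ℂ :=
  ∑ m ∈ Finset.range (n + 1),
    ((Real.Gamma mu * (m + 1) / (Nat.factorial m * Real.Gamma (lam * m + mu)) : ℝ) : ℂ) * z ^ m

/-- If `λ ≥ 1` and `μ > 3`, then on the open unit disc `(𝒲_{λ,μ})'_n` is nonzero and
`Re(𝒲'_{λ,μ}(z)/(𝒲_{λ,μ})'_n(z)) ≥ (μ-3)/(μ-1)`. -/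
theorem re_normWrightDeriv_div_partialDeriv (lam mu : ℝ) (hlam : 1 ≤ lam) (hmu : 3 < mu)
    (n : ℕ) :
    ∀ z : ℂ, ‖z‖ < 1 →
      normWrightPartialDeriv lam mu n z ≠ 0 ∧
      (mu - 3) / (mu - 1) ≤
        (normWrightDeriv lam mu z / normWrightPartialDeriv lam mu n z).re := by
  intro z hz
  have hmu0 : (0:ℝ) < mu := by linarith
  have hG : 0 < Real.Gamma mu := Real.Gamma_pos_of_pos hmu0
  set c : ℕ → ℝ := fun m =>
    Real.Gamma mu * (m + 1) / (Nat.factorial m * Real.Gamma (lam * m + mu)) with hc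
  set f : ℕ → ℂ := fun m => ((c m : ℝ) : ℂ) * z ^ m with hf
  set r : ℝ := ‖z‖ with hr
  have hr0 : 0 ≤ r := norm_nonneg z
  set q : ℝ := 1 / mu with hq
  have hq0 : 0 < q := by positivity
  have hq1 : q < 1 := by rw [hq]; rw [div_lt_one hmu0]; linarith
  -- positivity of coefficients
  have hcpos : ∀ m : ℕ, 0 ≤ c m := by
    intro m
    have h1 : 0 < lam * m + mu := by
      have : (0:ℝ) ≤ (m:ℝ) := Nat.cast_nonneg m
      nlinarith
    have h2 := Real.Gamma_pos_of_pos h1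
    have h3 : (0:ℝ) < Nat.factorial m := by exact_mod_cast Nat.factorial_pos m
    have h4 : (0:ℝ) ≤ (m:ℝ) + 1 := by positivity
    positivity
  have hc0 : c 0 = 1 := by
    simp only [hc, Nat.cast_zero, Nat.factorial_zero, Nat.cast_one, mul_zero, zero_add,
      zero_add, one_mul, mul_one]
    exact div_self (ne_of_gt hG)
  have hcb : ∀ m : ℕ, c m ≤ 2 * q ^ m := by
    intro m
    rcases Nat.eq_zero_or_pos m with h | h
    · subst h; rw [hc0]; norm_num
    · exact coeff_bound lam mu hlam hmu m h
  -- real norm function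
  set g : ℕ → ℝ := fun m => c m * r ^ m with hg
  have hgnn : ∀ m, 0 ≤ g m := fun m => mul_nonneg (hcpos m) (pow_nonneg hr0 m)
  have hnorm : ∀ m, ‖f m‖ = g m := by
    intro m
    simp only [hf, hg, norm_mul, Complex.norm_real, norm_pow, Real.norm_eq_abs,
      abs_of_nonneg (hcpos m)]
    rfl
  have hgb : ∀ m, g m ≤ 2 * q ^ m := by
    intro m
    have h1 : r ^ m ≤ 1 := pow_le_one₀ hr0 (le_of_lt hz)
    have := hcb m
    calc g m = c m * r ^ m := rfl
      _ ≤ c m * 1 := mul_le_mul_of_nonneg_left h1 (hcpos m)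
      _ = c m := mul_one _
      _ ≤ 2 * q ^ m := this
  have hgeo : Summable (fun m : ℕ => 2 * q ^ m) :=
    (summable_geometric_of_lt_one (le_of_lt hq0) hq1).mul_left 2
  have hgsum : Summable g :=
    Summable.of_nonneg_of_le hgnn hgb hgeo
  have hfsum : Summable f := by
    apply Summable.of_norm
    have : (fun m => ‖f m‖) = g := funext hnorm
    rw [this]; exact hgsum
  -- decomposition
  have hsplit := Summable.sum_add_tsum_nat_add (n + 1) hfsum
  set P : ℂ := normWrightPartialDeriv lam mu n z with hP
  set B : ℂ := ∑' k : ℕ, f (k + (n + 1)) with hB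
  have hPf : P = ∑ m ∈ range (n + 1), f m := rfl
  have hW : normWrightDeriv lam mu z = P + B := by
    rw [normWrightDeriv]
    rw [← hsplit, hPf]
  -- real sums
  set T : ℝ := ∑ i ∈ range n, g (i + 1) with hT
  set Tt : ℝ := ∑' k : ℕ, g (k + (n + 1)) with hTt
  set U : ℝ := ∑' k : ℕ, g (k + 1) with hU
  have hgsum1 : Summable (fun k => g (k + 1)) := by
    rwa [summable_nat_add_iff]
  have hgsumn : Summable (fun k => g (k + (n + 1))) := by
    rwa [summable_nat_add_iff]
  have hTU : T + Tt = U := by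
    have h := Summable.sum_add_tsum_nat_add n hgsum1
    have h2 : Tt = ∑' (i : ℕ), g (i + n + 1) :=
      tsum_congr (fun k => congrArg g (by omega))
    rw [hT, hU, h2, ← h]
  have hTt0 : 0 ≤ Tt := tsum_nonneg (fun k => hgnn _)
  have hT0 : 0 ≤ T := Finset.sum_nonneg (fun i _ => hgnn _)
  set e : ℝ := 2 / (mu - 1) with he
  have he0 : 0 < e := by rw [he]; exact div_pos (by norm_num) (by linarith)
  have he1 : e < 1 := by rw [he, div_lt_one (by linarith)]; linarith
  have hUe : U ≤ e := by
    have h1 : U ≤ ∑' k : ℕ, 2 * q ^ (k + 1) := by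
      apply Summable.tsum_le_tsum (fun k => hgb (k + 1)) hgsum1
      have : Summable (fun m : ℕ => 2 * q ^ m) := hgeo
      rwa [← summable_nat_add_iff 1] at this
    have h2 : ∑' k : ℕ, 2 * q ^ (k + 1) = 2 * q * (1 - q)⁻¹ := by
      have : ∀ k : ℕ, 2 * q ^ (k + 1) = (2 * q) * q ^ k := by
        intro k; ring
      rw [tsum_congr this, tsum_mul_left, tsum_geometric_of_lt_one (le_of_lt hq0) hq1]
    have h3 : 2 * q * (1 - q)⁻¹ = e := by
      rw [hq, he]
      have hmu1 : mu - 1 ≠ 0 := by intro h; nlinarith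
      field_simp
    rw [h2, h3] at h1
    exact h1
  have hTe : T ≤ e := by nlinarith
  -- norm of tail
  have hBn : ‖B‖ ≤ Tt := by
    rw [hB, hTt]
    have h := norm_tsum_le_tsum_norm (f := fun k => f (k + (n + 1))) ?_
    · calc ‖∑' k : ℕ, f (k + (n+1))‖ ≤ ∑' k : ℕ, ‖f (k + (n+1))‖ := h
        _ = ∑' k : ℕ, g (k + (n+1)) := tsum_congr (fun k => hnorm _)
    · have : (fun k => ‖f (k + (n + 1))‖) = fun k => g (k + (n + 1)) :=
        funext (fun k => hnorm _)
      rw [this]; exact hgsumn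
  -- lower bound on ‖P‖
  have hA : P = (∑ i ∈ range n, f (i + 1)) + f 0 := by
    rw [hPf, Finset.sum_range_succ']
  have hf0 : f 0 = 1 := by simp [hf, hc0]
  set A : ℂ := ∑ i ∈ range n, f (i + 1) with hAdef
  have hAn : ‖A‖ ≤ T := by
    calc ‖A‖ ≤ ∑ i ∈ range n, ‖f (i + 1)‖ := norm_sum_le _ _
      _ = T := Finset.sum_congr rfl (fun i _ => hnorm _)
  have hPn : 1 - T ≤ ‖P‖ := by
    have h1 : (1:ℝ) = ‖(A + 1) - A‖ := by simp
    have h2 : ‖(A + 1) - A‖ ≤ ‖A + 1‖ + ‖A‖ := norm_sub_le _ _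
    have h3 : P = A + 1 := by rw [hA, hf0]
    rw [h3]; linarith [h1 ▸ h2]
  have hPpos : 0 < ‖P‖ := by linarith
  have hPne : P ≠ 0 := by
    intro h; rw [h] at hPpos; simp at hPpos
  refine ⟨hPne, ?_⟩
  -- tail bound vs e * ‖P‖
  have hTtb : Tt ≤ e * (1 - T) := by nlinarith
  have hBP : ‖B‖ ≤ e * ‖P‖ := by
    calc ‖B‖ ≤ Tt := hBn
      _ ≤ e * (1 - T) := hTtb
      _ ≤ e * ‖P‖ := mul_le_mul_of_nonneg_left hPn (le_of_lt he0)
  have hdiv : ‖B / P‖ ≤ e := by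
    rw [norm_div]
    rw [div_le_iff₀ hPpos]
    exact hBP
  have hre : -e ≤ (B / P).re := by
    have h1 : |(B / P).re| ≤ ‖B / P‖ := Complex.abs_re_le_norm _
    have h2 : -(B / P).re ≤ |(B / P).re| := neg_le_abs _
    linarith
  have hWP : (normWrightDeriv lam mu z / P) = 1 + B / P := by
    rw [hW, add_div, div_self hPne]
  rw [hWP]
  have : (1 + B / P).re = 1 + (B / P).re := by simp
  rw [this]
  have hfin : (mu - 3) / (mu - 1) = 1 - e := by
    rw [he]
    have hmu1 : mu - 1 ≠ 0 := by intro h; nlinarith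
    field_simp
    ring
  rw [hfin]
  linarith
end
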